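/- (Preservation) Let H be a mesh, τ_1 a distributed type with H ⊢ τ_1, and τ_1 →^p τ_2 a collective operation step with p ∈ {allGather(i), dynSlice(i,x), allToAll(i,j)}. Then H ⊢ τ_2 and globaltype(τ_2) = globaltype(τ_1). -/

import Mathlib

/-! ## Meshes, index tuples, distributed dimensions and types -/

structure Mesh where
  axes : Finset String
  size : String → ℕ
  size_pos : ∀ x ∈ axes, 1 ≤ size x

def Mesh.hasAxis (H : Mesh) (x : String) (n : ℕ) : Prop :=
  x ∈ H.axes ∧ H.size x = n

abbrev IndexTuple (H : Mesh) : Type :=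
  {ι : String → ℕ // ∀ x : String, (x ∈ H.axes → ι x < H.size x) ∧ (x ∉ H.axes → ι x = 0)}

structure Dim where
  tile : ℕ
  axes : List String
  global : ℕ
deriving DecidableEq

abbrev DType := List Dim

def Mesh.WFDim (H : Mesh) (d : Dim) : Prop :=
  1 ≤ d.tile ∧ d.axes.Nodup ∧ (∀ x ∈ d.axes, x ∈ H.axes) ∧
    d.tile * (d.axes.map H.size).prod = d.global

def Mesh.WFType (H : Mesh) (τ : DType) : Prop :=
  (∀ d ∈ τ, H.WFDim d) ∧ List.Pairwise (fun d e => ∀ x ∈ d.axes, x ∉ e.axes) τ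

def globaltype (τ : DType) : List ℕ := τ.map Dim.global
def localtype (τ : DType) : List ℕ := τ.map Dim.tile
def localsize (τ : DType) : ℕ := (τ.map Dim.tile).prod

def typeAxes : DType → List String
  | [] => []
  | d :: τ => d.axes ++ typeAxes τ

/-- Base offset map of a distributed dimension, `⟦c{xs}n⟧_D`. -/
def dimOffset (H : Mesh) : ℕ → List String → (String → ℕ) → ℕ
  | _, [], _ => 0
  | c, x :: xs, ι => c * ι x + dimOffset H (c * H.size x) xs ι

abbrev BOM (H : Mesh) : Type := IndexTuple H → List ℕ

/-- Base offset map of a distributed type, `⟦τ⟧_T`. -/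
def typeOffset (H : Mesh) (τ : DType) : BOM H :=
  fun ι => τ.map (fun d => dimOffset H d.tile d.axes ι.val)

/-! ## Collective operations (high-level typing rules) -/

inductive Label where
  | allGather (i : ℕ)
  | dynSlice (i : ℕ) (x : String)
  | allToAll (i j : ℕ)
  | allPermute
deriving DecidableEq

inductive OpKind where
  | gather | slice | toAll | permute
deriving DecidableEq

def Label.kind : Label → OpKind
  | .allGather _ => .gather
  | .dynSlice _ _ => .slice
  | .allToAll _ _ => .toAll
  | .allPermute => .permute

inductive Step (H : Mesh) : Label → DType → DType → Prop where
  | allGather {τ : DType} (i : ℕ) {c : ℕ} {x : String} {xs : List String} {s n : ℕ}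
      (hwf : H.WFType τ) (hx : H.hasAxis x n)
      (hi : τ[i]? = some ⟨c, x :: xs, s⟩) :
      Step H (.allGather i) τ (τ.set i ⟨c * n, xs, s⟩)
  | dynSlice {τ : DType} (i : ℕ) (x : String) {c : ℕ} {xs : List String} {s n : ℕ}
      (hwf : H.WFType τ) (hx : H.hasAxis x n) (hfresh : x ∉ typeAxes τ)
      (hi : τ[i]? = some ⟨c * n, xs, s⟩) :
      Step H (.dynSlice i x) τ (τ.set i ⟨c, x :: xs, s⟩)
  | allToAll {τ : DType} (i j : ℕ) {ci : ℕ} {x : String} {xsi : List String} {si cj : ℕ}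
      {xsj : List String} {sj n : ℕ}
      (hwf : H.WFType τ) (hij : i ≠ j) (hx : H.hasAxis x n)
      (hi : τ[i]? = some ⟨ci, x :: xsi, si⟩)
      (hj : τ[j]? = some ⟨cj, xsj, sj⟩)
      (hdvd : n ∣ cj) :
      Step H (.allToAll i j) τ ((τ.set i ⟨ci * n, xsi, si⟩).set j ⟨cj / n, x :: xsj, sj⟩)
  | allPermute {τ₁ τ₂ : DType}
      (hwf1 : H.WFType τ₁) (hwf2 : H.WFType τ₂)
      (hl : localtype τ₁ = localtype τ₂) (hg : globaltype τ₁ = globaltype τ₂) :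
      Step H .allPermute τ₁ τ₂

/-! ## Sequences of collective operations -/

inductive CSeq (H : Mesh) : DType → DType → Type where
  | nil (τ : DType) : CSeq H τ τ
  | cons {τ₁ τ₂ τ₃ : DType} (p : Label) (h : Step H p τ₁ τ₂) (s : CSeq H τ₂ τ₃) : CSeq H τ₁ τ₃

def CSeq.labels {H : Mesh} : {τ₁ τ₂ : DType} → CSeq H τ₁ τ₂ → List Label
  | _, _, .nil _ => []
  | _, _, .cons p _ s => p :: s.labels

def CSeq.typesList {H : Mesh} : {τ₁ τ₂ : DType} → CSeq H τ₁ τ₂ → List DType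
  | _, _, .nil τ => [τ]
  | τ, _, .cons _ _ s => τ :: s.typesList

/-- The height 𝔥 of a sequence: the maximum `localsize` over all types in it. -/
def CSeq.height {H : Mesh} {τ₁ τ₂ : DType} (s : CSeq H τ₁ τ₂) : ℕ :=
  (s.typesList.map localsize).foldr max 0

/-- Cost of a single step with source `σ₁` and target `σ₂`. -/
def stepCost (p : Label) (σ₁ σ₂ : DType) : ℕ :=
  match p with
  | .allGather _ => localsize σ₂
  | .dynSlice _ _ => 0
  | .allToAll _ _ => localsize σ₁
  | .allPermute => localsize σ₁

def CSeq.cost {H : Mesh} : {τ₁ τ₂ : DType} → CSeq H τ₁ τ₂ → ℕ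
  | _, _, .nil _ => 0
  | _, _, @CSeq.cons _ σ₁ σ₂ _ p _ s => stepCost p σ₁ σ₂ + s.cost

/-- Normal form: labels matched by `dynSlice* {allToAll | allPermute}* allGather*`. -/
def NormalFormK (ks : List OpKind) : Prop :=
  ∃ a b c : List OpKind, ks = a ++ b ++ c ∧
    (∀ k ∈ a, k = OpKind.slice) ∧
    (∀ k ∈ b, k = OpKind.toAll ∨ k = OpKind.permute) ∧
    (∀ k ∈ c, k = OpKind.gather)

/-! ## Weak collectives -/

/-- Equivalence of base offset maps. -/
def bomEquiv (H : Mesh) (β₁ β₂ : BOM H) : Prop :=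
  ∃ π : Equiv.Perm (IndexTuple H), β₂ = β₁ ∘ π

/-- The weak collective relation `⟦τ₁⟧_E ▶^p ⟦τ₂⟧_E`, represented on types. -/
def WeakStep (H : Mesh) (p : Label) (τ₁ τ₂ : DType) : Prop :=
  p ≠ Label.allPermute ∧ H.WFType τ₁ ∧ H.WFType τ₂ ∧
  ∃ σ₁ σ₂ : DType, Step H p σ₁ σ₂ ∧
    bomEquiv H (typeOffset H σ₁) (typeOffset H τ₁) ∧
    bomEquiv H (typeOffset H σ₂) (typeOffset H τ₂)

inductive WkSeq (H : Mesh) : DType → DType → Type where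
  | nil (τ : DType) : WkSeq H τ τ
  | cons {τ₁ τ₂ τ₃ : DType} (p : Label) (h : WeakStep H p τ₁ τ₂) (s : WkSeq H τ₂ τ₃) :
      WkSeq H τ₁ τ₃

def WkSeq.labels {H : Mesh} : {τ₁ τ₂ : DType} → WkSeq H τ₁ τ₂ → List Label
  | _, _, .nil _ => []
  | _, _, .cons p _ s => p :: s.labels

def WkSeq.typesList {H : Mesh} : {τ₁ τ₂ : DType} → WkSeq H τ₁ τ₂ → List DType
  | _, _, .nil τ => [τ]
  | τ, _, .cons _ _ s => τ :: s.typesList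

def WkSeq.height {H : Mesh} {τ₁ τ₂ : DType} (s : WkSeq H τ₁ τ₂) : ℕ :=
  (s.typesList.map localsize).foldr max 0

def WkSeq.cost {H : Mesh} : {τ₁ τ₂ : DType} → WkSeq H τ₁ τ₂ → ℕ
  | _, _, .nil _ => 0
  | _, _, @WkSeq.cons _ σ₁ σ₂ _ p _ s => stepCost p σ₁ σ₂ + s.cost

/-! ## Low-level MPI-style collectives on device assignments -/

abbrev DevMap (H : Mesh) (D : Type) := IndexTuple H ≃ D

structure DevAssign (H : Mesh) (D : Type) where
  dmap : DevMap H D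
  bom : BOM H

inductive LLabel where
  | allGather (x : String)
  | allToAll (x : String) (j : ℕ)
  | dynSlice (i : ℕ) (x : String)
  | allPermute
deriving DecidableEq

def LLabel.kind : LLabel → OpKind
  | .allGather _ => .gather
  | .allToAll _ _ => .toAll
  | .dynSlice _ _ => .slice
  | .allPermute => .permute

inductive LStep (H : Mesh) (D : Type) : LLabel → DevAssign H D → DevAssign H D → Type where
  | gather (τ : DType) (i : ℕ) (c : ℕ) (ys : List String) (x : String) (xs : List String)
      (s n : ℕ) (φ φ' : DevMap H D)
      (hwf : H.WFType τ) (hx : H.hasAxis x n)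
      (hi : τ[i]? = some ⟨c, ys ++ x :: xs, s⟩)
      (hmap : typeOffset H (τ.set i ⟨c, x :: (ys ++ xs), s⟩) ∘ ⇑φ'.symm
            = typeOffset H τ ∘ ⇑φ.symm) :
      LStep H D (.allGather x) ⟨φ, typeOffset H τ⟩
        ⟨φ', typeOffset H (τ.set i ⟨c * n, ys ++ xs, s⟩)⟩
  | toAll (τ : DType) (i j : ℕ) (ci : ℕ) (ys : List String) (x : String) (xs : List String)
      (si cj : ℕ) (xsj : List String) (sj n : ℕ) (φ φ' : DevMap H D)
      (hwf : H.WFType τ) (hij : i ≠ j) (hx : H.hasAxis x n)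
      (hi : τ[i]? = some ⟨ci, ys ++ x :: xs, si⟩)
      (hj : τ[j]? = some ⟨cj, xsj, sj⟩)
      (hdvd : n ∣ cj)
      (hmap : typeOffset H (τ.set i ⟨ci, x :: (ys ++ xs), si⟩) ∘ ⇑φ'.symm
            = typeOffset H τ ∘ ⇑φ.symm) :
      LStep H D (.allToAll x j) ⟨φ, typeOffset H τ⟩
        ⟨φ', typeOffset H ((τ.set i ⟨ci * n, ys ++ xs, si⟩).set j ⟨cj / n, x :: xsj, sj⟩)⟩
  | slice (τ : DType) (i : ℕ) (x : String) (c : ℕ) (xs : List String) (s n : ℕ)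
      (φ : DevMap H D)
      (hwf : H.WFType τ) (hx : H.hasAxis x n) (hfresh : x ∉ typeAxes τ)
      (hi : τ[i]? = some ⟨c * n, xs, s⟩) :
      LStep H D (.dynSlice i x) ⟨φ, typeOffset H τ⟩ ⟨φ, typeOffset H (τ.set i ⟨c, x :: xs, s⟩)⟩
  | permute (τ : DType) (ρ : Equiv.Perm (IndexTuple H)) (β' : BOM H)
      (φ φ' : DevMap H D) (π : Equiv.Perm D)
      (hwf : H.WFType τ)
      (hmap : β' ∘ ⇑φ'.symm = (typeOffset H τ ∘ ⇑ρ) ∘ ⇑φ.symm ∘ ⇑π) :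
      LStep H D .allPermute ⟨φ, typeOffset H τ ∘ ⇑ρ⟩ ⟨φ', β'⟩

def LStep.cost {H : Mesh} {D : Type} :
    {l : LLabel} → {a b : DevAssign H D} → LStep H D l a b → ℕ
  | _, _, _, .gather τ i c ys x xs s n .. => localsize (τ.set i ⟨c * n, ys ++ xs, s⟩)
  | _, _, _, .toAll τ .. => localsize τ
  | _, _, _, .slice .. => 0
  | _, _, _, .permute τ .. => localsize τ

inductive LoSeq (H : Mesh) (D : Type) : DevAssign H D → DevAssign H D → Type where
  | nil (a : DevAssign H D) : LoSeq H D a a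
  | cons {a b c : DevAssign H D} (l : LLabel) (st : LStep H D l a b) (s : LoSeq H D b c) :
      LoSeq H D a c

def LoSeq.labels {H : Mesh} {D : Type} : {a b : DevAssign H D} → LoSeq H D a b → List LLabel
  | _, _, .nil _ => []
  | _, _, .cons l _ s => l :: s.labels

def LoSeq.states {H : Mesh} {D : Type} : {a b : DevAssign H D} → LoSeq H D a b → List (DevAssign H D)
  | _, _, .nil a => [a]
  | a, _, .cons _ _ s => a :: s.states

def LoSeq.cost {H : Mesh} {D : Type} : {a b : DevAssign H D} → LoSeq H D a b → ℕ
  | _, _, .nil _ => 0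
  | _, _, .cons _ st s => st.cost + s.cost

private lemma mem_typeAxes' {x : String} : ∀ {τ : DType}, x ∈ typeAxes τ ↔ ∃ d ∈ τ, x ∈ d.axes
  | [] => by simp [typeAxes]
  | d :: τ => by simp [typeAxes, mem_typeAxes' (τ := τ)]

private lemma globaltype_set' {τ : DType} {i : ℕ} {d d' : Dim} (h : τ[i]? = some d)
    (hg : d'.global = d.global) : globaltype (τ.set i d') = globaltype τ := by
  obtain ⟨hi, hd⟩ := List.getElem?_eq_some_iff.1 h
  simp only [globaltype, List.map_set]
  apply List.ext_getElem (by simp)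
  intro j h1 h2
  rw [List.getElem_set]
  split
  · next heq => subst heq; simp [hg, ← hd]
  · rfl

private lemma disj_of_pairwise {τ : DType}
    (hpw : List.Pairwise (fun d e => ∀ x ∈ d.axes, x ∉ e.axes) τ)
    {j k : ℕ} (hj : j < τ.length) (hk : k < τ.length) (hjk : j ≠ k)
    {x} (hx : x ∈ τ[j].axes) : x ∉ τ[k].axes := by
  rw [List.pairwise_iff_getElem] at hpw
  rcases Nat.lt_or_gt_of_ne hjk with h | h
  · exact hpw j k hj hk h x hx
  · intro hx'; exact hpw k j hk hj h x hx' hx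

private lemma pairwise_set_of {τ : DType} {i : ℕ} {d' : Dim}
    (hpw : List.Pairwise (fun d e => ∀ x ∈ d.axes, x ∉ e.axes) τ)
    (hd : ∀ j (_ : j < τ.length), j ≠ i → ∀ x ∈ d'.axes, x ∉ τ[j].axes) :
    List.Pairwise (fun d e => ∀ x ∈ d.axes, x ∉ e.axes) (τ.set i d') := by
  rw [List.pairwise_iff_getElem] at hpw ⊢
  intro k l hk hl hkl
  simp only [List.length_set] at hk hl
  rw [List.getElem_set, List.getElem_set]
  by_cases hik : i = k
  · subst hik
    rw [if_pos rfl, if_neg (by omega)]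
    exact hd l hl (by omega)
  · rw [if_neg hik]
    by_cases hil : i = l
    · subst hil
      rw [if_pos rfl]
      intro x hx hx'
      exact hd k hk (by omega) x hx' hx
    · rw [if_neg hil]; exact hpw k l hk hl hkl

/-- Preservation: collective operations preserve well-formedness and the global type. -/
theorem stmt15 (H : Mesh) (p : Label) (τ₁ τ₂ : DType)
    (h1 : H.WFType τ₁) (h : Step H p τ₁ τ₂) (hp : p ≠ Label.allPermute) :
    H.WFType τ₂ ∧ globaltype τ₂ = globaltype τ₁ := by
  obtain ⟨hwd, hpw⟩ := h1
  cases h with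
  | @allGather τ i c x xs s n hwf hx hi =>
      obtain ⟨hilt, hτi⟩ := List.getElem?_eq_some_iff.1 hi
      have wf : H.WFDim τ₁[i] := hwd _ (List.getElem_mem hilt)
      rw [hτi] at wf
      obtain ⟨hc, hnd, hax, hprod⟩ := wf
      have hn : 1 ≤ n := hx.2 ▸ H.size_pos x hx.1
      refine ⟨⟨?_, ?_⟩, globaltype_set' hi rfl⟩
      · intro d hd
        rcases List.mem_or_eq_of_mem_set hd with hmem | rfl
        · exact hwd d hmem
        · refine ⟨Nat.mul_pos hc hn, (List.nodup_cons.1 hnd).2,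
            fun y hy => hax y (List.mem_cons_of_mem _ hy), ?_⟩
          simp only [List.map_cons, List.prod_cons, hx.2] at hprod
          simp only [← hprod]; ring
      · refine pairwise_set_of hpw fun j hj hji y hy => ?_
        have : y ∈ (Dim.mk c (x :: xs) s).axes := List.mem_cons_of_mem _ hy
        rw [← hτi] at this
        exact disj_of_pairwise hpw hilt hj (Ne.symm hji) this
  | @dynSlice τ i x c xs s n hwf hfx hfresh hi =>
      obtain ⟨hilt, hτi⟩ := List.getElem?_eq_some_iff.1 hi
      have wf : H.WFDim τ₁[i] := hwd _ (List.getElem_mem hilt)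
      rw [hτi] at wf
      obtain ⟨hc, hnd, hax, hprod⟩ := wf
      have hn : 1 ≤ n := hfx.2 ▸ H.size_pos x hfx.1
      have hxi : x ∉ τ₁[i].axes := fun hmem =>
        hfresh (mem_typeAxes'.2 ⟨_, List.getElem_mem hilt, hmem⟩)
      rw [hτi] at hxi
      refine ⟨⟨?_, ?_⟩, globaltype_set' hi rfl⟩
      · intro d hd
        rcases List.mem_or_eq_of_mem_set hd with hmem | rfl
        · exact hwd d hmem
        · refine ⟨?_, List.nodup_cons.2 ⟨hxi, hnd⟩, ?_, ?_⟩
          · rcases Nat.eq_zero_or_pos c with rfl | hcp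
            · simp at hc
            · exact hcp
          · intro y hy
            rcases List.mem_cons.1 hy with rfl | hy'
            · exact hfx.1
            · exact hax y hy'
          · have hprod' : (c * n) * (List.map H.size xs).prod = s := hprod
            simp only [List.map_cons, List.prod_cons, hfx.2, ← hprod']
            ring
      · refine pairwise_set_of hpw fun j hj hji y hy => ?_
        rcases List.mem_cons.1 hy with rfl | hy'
        · intro hmem
          exact hfresh (mem_typeAxes'.2 ⟨_, List.getElem_mem hj, hmem⟩)
        · have : y ∈ τ₁[i].axes := hτi ▸ hy'
          exact disj_of_pairwise hpw hilt hj (Ne.symm hji) this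
  | @allToAll τ i j ci x xsi si cj xsj sj n hwf hij hx hi hj hdvd =>
      obtain ⟨hilt, hτi⟩ := List.getElem?_eq_some_iff.1 hi
      obtain ⟨hjlt, hτj⟩ := List.getElem?_eq_some_iff.1 hj
      have wfi : H.WFDim τ₁[i] := hwd _ (List.getElem_mem hilt)
      have wfj : H.WFDim τ₁[j] := hwd _ (List.getElem_mem hjlt)
      rw [hτi] at wfi; rw [hτj] at wfj
      obtain ⟨hci, hndi, haxi, hprodi⟩ := wfi
      obtain ⟨hcj, hndj, haxj, hprodj⟩ := wfj
      have hn : 1 ≤ n := hx.2 ▸ H.size_pos x hx.1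
      have hxmemi : x ∈ τ₁[i].axes := by rw [hτi]; exact List.mem_cons_self (a := x) (l := xsi)
      have hxnotj : x ∉ xsj := fun hmem =>
        disj_of_pairwise hpw hilt hjlt hij hxmemi (hτj ▸ hmem)
      -- WFDim for the two new dims
      have wfdi : H.WFDim ⟨ci * n, xsi, si⟩ := by
        refine ⟨Nat.mul_pos hci hn, (List.nodup_cons.1 hndi).2,
          fun y hy => haxi y (List.mem_cons_of_mem _ hy), ?_⟩
        simp only [List.map_cons, List.prod_cons, hx.2] at hprodi
        simp only [← hprodi]; ring
      have wfdj : H.WFDim ⟨cj / n, x :: xsj, sj⟩ := by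
        refine ⟨Nat.div_pos (Nat.le_of_dvd hcj hdvd) hn, List.nodup_cons.2 ⟨hxnotj, hndj⟩,
          ?_, ?_⟩
        · intro y hy
          rcases List.mem_cons.1 hy with rfl | hy'
          · exact hx.1
          · exact haxj y hy'
        · have hprod' : cj * (List.map H.size xsj).prod = sj := hprodj
          simp only [List.map_cons, List.prod_cons, hx.2, ← hprod']
          rw [← Nat.mul_assoc, Nat.div_mul_cancel hdvd]
      constructor
      · constructor
        · intro d hd
          rcases List.mem_or_eq_of_mem_set hd with hd' | rfl
          · rcases List.mem_or_eq_of_mem_set hd' with hmem | rfl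
            · exact hwd d hmem
            · exact wfdi
          · exact wfdj
        · have hpw1 : List.Pairwise (fun d e => ∀ x ∈ d.axes, x ∉ e.axes)
              (τ₁.set i ⟨ci * n, xsi, si⟩) := by
            refine pairwise_set_of hpw fun k hk hki y hy => ?_
            have : y ∈ τ₁[i].axes := by
              rw [hτi]; exact List.mem_cons_of_mem _ hy
            exact disj_of_pairwise hpw hilt hk (Ne.symm hki) this
          refine pairwise_set_of hpw1 fun k hk hkj y hy => ?_
          simp only [List.length_set] at hk
          rw [List.getElem_set]
          by_cases hik : i = k
          · subst hik
            rw [if_pos rfl]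
            rcases List.mem_cons.1 hy with rfl | hy'
            · exact (List.nodup_cons.1 hndi).1
            · intro hmem
              have hyj : y ∈ τ₁[j].axes := by rw [hτj]; exact hy'
              have : y ∈ τ₁[i].axes := by
                rw [hτi]; exact List.mem_cons_of_mem _ hmem
              exact disj_of_pairwise hpw hjlt hilt (Ne.symm hij) hyj this
          · rw [if_neg hik]
            rcases List.mem_cons.1 hy with rfl | hy'
            · exact disj_of_pairwise hpw hilt hk (by omega) hxmemi
            · have hyj : y ∈ τ₁[j].axes := by rw [hτj]; exact hy'
              exact disj_of_pairwise hpw hjlt hk (Ne.symm hkj) hyj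
      · have e2 : globaltype ((τ₁.set i (⟨ci * n, xsi, si⟩ : Dim)).set j
              (⟨cj / n, x :: xsj, sj⟩ : Dim)) = globaltype (τ₁.set i ⟨ci * n, xsi, si⟩) :=
          globaltype_set' (d := ⟨cj, xsj, sj⟩)
            (by rw [List.getElem?_set_ne hij]; exact hj) rfl
        have e1 : globaltype (τ₁.set i (⟨ci * n, xsi, si⟩ : Dim)) = globaltype τ₁ :=
          globaltype_set' hi rfl
        rw [e2, e1]
  | allPermute hwf1 hwf2 hl hg => exact absurd rfl hp
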